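/- Let F be a field of characteristic ≠ 2 and let a, b ∈ M₂(F) be traceless matrices such that det(a×b) ≠ 0. Then the triple of matrices a, b, a×b is linearly independent over F. -/

import Mathlib

open Matrix

/-- The cross product of traceless 2×2 matrices: `a×b = (ab - ba)/2`. -/
noncomputable def matCross {F : Type*} [Field F] (a b : Matrix (Fin 2) (Fin 2) F) :
    Matrix (Fin 2) (Fin 2) F :=
  (2 : F)⁻¹ • (a * b - b * a)

/-- if `a, b` are traceless and `det(a×b) ≠ 0` then the triple
`a, b, a×b` is linearly independent. -/
theorem stmt7 {F : Type*} [Field F] (h2 : (2 : F) ≠ 0)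
    (a b : Matrix (Fin 2) (Fin 2) F) (ha : a.trace = 0) (hb : b.trace = 0)
    (hdet : (matCross a b).det ≠ 0) :
    LinearIndependent F ![a, b, matCross a b] := by
  rw [Fintype.linearIndependent_iff]
  intro g hg
  set c := matCross a b with hc
  have hctr : c.trace = 0 := by
    simp only [hc, matCross, Matrix.trace_fin_two, Matrix.smul_apply, Matrix.sub_apply,
      Matrix.mul_apply, Fin.sum_univ_two, smul_eq_mul]
    ring
  have htrcc : trace (c * c) = -(2 * c.det) := by
    simp only [Matrix.det_fin_two, Matrix.trace_fin_two, Matrix.mul_apply,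
      Fin.sum_univ_two] at hctr ⊢
    linear_combination (c 0 0 + c 1 1) * hctr
  have hac : trace (a * c) = 0 := by
    simp only [hc, matCross, Matrix.trace_fin_two, Matrix.mul_apply, Fin.sum_univ_two,
      Matrix.smul_apply, Matrix.sub_apply, smul_eq_mul]
    ring
  have hbc : trace (b * c) = 0 := by
    simp only [hc, matCross, Matrix.trace_fin_two, Matrix.mul_apply, Fin.sum_univ_two,
      Matrix.smul_apply, Matrix.sub_apply, smul_eq_mul]
    ring
  have hg' : g 0 • a + g 1 • b + g 2 • c = 0 := by
    simpa [Fin.sum_univ_three, add_assoc] using hg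
  have hg2 : g 2 = 0 := by
    have h := congrArg (fun m => trace (m * c)) hg'
    simp only [Matrix.add_mul, Matrix.smul_mul, Matrix.zero_mul, trace_add, trace_smul,
      trace_zero, hac, hbc, htrcc, smul_eq_mul, mul_zero, zero_add, add_zero] at h
    have : g 2 * -(2 * c.det) = 0 := h
    rcases mul_eq_zero.mp this with h' | h'
    · exact h'
    · exact absurd h' (by simp [h2, hdet])
  rw [hg2, zero_smul, add_zero] at hg'
  have hg0 : g 0 = 0 := by
    by_contra h0
    have hab : a * b = b * a := by
      have h1 : g 0 • a = -(g 1 • b) := eq_neg_of_add_eq_zero_left hg'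
      have h2' : g 0 • (a * b) = g 0 • (b * a) := by
        calc g 0 • (a * b) = (g 0 • a) * b := by rw [Matrix.smul_mul]
          _ = -(g 1 • b) * b := by rw [h1]
          _ = -(g 1 • (b * b)) := by
              simp [Matrix.smul_mul, Matrix.neg_mul]
          _ = b * -(g 1 • b) := by
              simp [Matrix.mul_smul, Matrix.mul_neg]
          _ = b * (g 0 • a) := by rw [h1]
          _ = g 0 • (b * a) := by rw [Matrix.mul_smul]
      exact smul_right_injective _ h0 h2'
    apply hdet
    rw [hc, matCross, hab, sub_self, smul_zero, Matrix.det_zero]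
  rw [hg0, zero_smul, zero_add] at hg'
  have hg1 : g 1 = 0 := by
    by_contra h1
    have hb0 : b = 0 := by
      have := smul_right_injective (Matrix (Fin 2) (Fin 2) F) h1 (by rw [hg', smul_zero] : g 1 • b = g 1 • 0)
      exact this
    apply hdet
    rw [hc, matCross, hb0, Matrix.mul_zero, Matrix.zero_mul, sub_self, smul_zero,
      Matrix.det_zero]
  intro i
  fin_cases i <;> assumption
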